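/- Fix d with 0 < d < 1. For σ² > 1/2 set ρ = 1 − 1/(2σ²), and define R(σ², d) as the infimum of (1/2) · log( (1 − ρ²)/(αβ) + 1/α + 1/β + 1 ) over all pairs (α, β) of positive reals satisfying 1 − (1/σ²) · (2(1 + ρ) + α + β) / (4(1 + α)(1 + β) − 4ρ²) ≤ d. Then R(σ², d) → ∞ as σ² → ∞. -/

import Mathlib

open Filter

/-- The Berger-Tung sum rate `I(x; u)` of the separation-based scheme with Gaussian test
channels of noise variances `α σ²` and `β σ²` (natural logarithm). -/
noncomputable def sumRate (α β ρ : ℝ) : ℝ :=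
  (1 / 2) * Real.log ((1 - ρ ^ 2) / (α * β) + 1 / α + 1 / β + 1)

/-- The resulting quadratic distortion `E[(x₃ − E[x₃|u₁,u₂])²]` for `x₃ = x₁ − x₂`. -/
noncomputable def distortionOf (s α β ρ : ℝ) : ℝ :=
  1 - (1 / s) * ((2 * (1 + ρ) + α + β) / (4 * (1 + α) * (1 + β) - 4 * ρ ^ 2))

/-- `R(σ², d)`: the infimum of the sum rate over all positive noise-variance ratios
`(α, β)` meeting the distortion constraint `d`, with `ρ = 1 − 1/(2σ²)`. -/
noncomputable def minSumRate (d s : ℝ) : ℝ :=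
  sInf { r : ℝ | ∃ α β : ℝ, 0 < α ∧ 0 < β ∧
    distortionOf s α β (1 - 1 / (2 * s)) ≤ d ∧ r = sumRate α β (1 - 1 / (2 * s)) }

lemma aux_nonempty (d s : ℝ) (hd0 : 0 < d) (hd1 : d < 1) (hs : 1 ≤ s) :
    ∃ α β : ℝ, 0 < α ∧ 0 < β ∧
      distortionOf s α β (1 - 1 / (2 * s)) ≤ d := by
  have hs0 : (0:ℝ) < s := lt_of_lt_of_le one_pos hs
  have hd1' : (0:ℝ) < 1 - d := by linarith
  set t : ℝ := d / (2 * s * (1 - d)) with ht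
  have htpos : 0 < t := by positivity
  refine ⟨t, t, htpos, htpos, ?_⟩
  have hden : 4 * (1 + t) * (1 + t) - 4 * (1 - 1 / (2 * s)) ^ 2 ≠ 0 := by
    have h1 : 0 < 1 / (2 * s) := by positivity
    have h2 : 1 / (2 * s) ≤ 1 / 2 := by
      rw [div_le_div_iff₀ (by positivity) (by norm_num)]; linarith
    nlinarith [sq_nonneg t]
  have hEq : 2 * (1 + (1 - 1 / (2 * s))) + t + t =
      s * (1 - d) * (4 * (1 + t) * (1 + t) - 4 * (1 - 1 / (2 * s)) ^ 2) := by
    rw [ht]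
    field_simp
    ring
  have : distortionOf s t t (1 - 1 / (2 * s)) = d := by
    unfold distortionOf
    rw [hEq, mul_div_assoc, div_self hden, mul_one]
    field_simp
    ring
  linarith [this.le]

lemma aux_lower (d s : ℝ) (hd0 : 0 < d) (hd1 : d < 1) (hs : 1 ≤ s)
    (hs2 : 1 / (2 * (1 - d)) ≤ s) :
    ∀ r ∈ { r : ℝ | ∃ α β : ℝ, 0 < α ∧ 0 < β ∧
      distortionOf s α β (1 - 1 / (2 * s)) ≤ d ∧ r = sumRate α β (1 - 1 / (2 * s)) },
    (1 / 2) * Real.log (4 * (1 - d) * s - 1) ≤ r := by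
  rintro r ⟨α, β, hα, hβ, hcon, rfl⟩
  have hs0 : (0:ℝ) < s := lt_of_lt_of_le one_pos hs
  have hd1' : (0:ℝ) < 1 - d := by linarith
  set ρ : ℝ := 1 - 1 / (2 * s) with hρ
  clear_value ρ
  have hρ1 : 0 < 1 / (2 * s) := by positivity
  have hρ2 : 1 / (2 * s) ≤ 1 / 2 := by
    rw [div_le_div_iff₀ (by positivity) (by norm_num)]; linarith
  have hρlt : ρ < 1 := by rw [hρ]; linarith
  have hρge : 1 / 2 ≤ ρ := by rw [hρ]; linarith
  have hρsq : ρ ^ 2 < 1 := by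
    nlinarith [mul_pos (by linarith : (0:ℝ) < 1 - ρ) (by linarith : (0:ℝ) < 1 + ρ)]
  set D : ℝ := 4 * (1 + α) * (1 + β) - 4 * ρ ^ 2 with hD
  clear_value D
  have hDpos : 0 < D := by rw [hD]; nlinarith [mul_pos hα hβ]
  set N : ℝ := 2 * (1 + ρ) + α + β with hN
  clear_value N
  -- from constraint: (1-d) * s * D ≤ N
  have hkey : (1 - d) * s * D ≤ N := by
    unfold distortionOf at hcon
    rw [← hD, ← hN] at hcon
    have h1 : 1 - d ≤ (1 / s) * (N / D) := by linarith
    have h2 : (1 - d) * s ≤ N / D := by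
      rw [one_div, inv_mul_eq_div, le_div_iff₀ hs0] at h1
      linarith [h1]
    rw [le_div_iff₀ hDpos] at h2
    linarith [h2]
  -- c := 4 * (1-d) * s, c ≥ 2
  have hc2 : 2 ≤ 4 * (1 - d) * s := by
    rw [div_le_iff₀ (by positivity)] at hs2
    nlinarith
  -- (c - 1) * (α + β) ≤ 4
  have hab : (4 * (1 - d) * s - 1) * (α + β) ≤ 4 := by
    have hN4 : N ≤ 4 + α + β := by rw [hN]; nlinarith
    have hD4 : 4 * (α + β) ≤ D := by rw [hD]; nlinarith [mul_pos hα hβ]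
    nlinarith [mul_le_mul_of_nonneg_left hD4 (by positivity : (0:ℝ) ≤ (1 - d) * s)]
  have habpos : 0 < α + β := by linarith
  -- c - 1 ≤ 4 / (α+β)
  have h5 : 4 * (1 - d) * s - 1 ≤ 4 / (α + β) := by
    rw [le_div_iff₀ habpos]; linarith
  -- 4/(α+β) ≤ 1/α + 1/β
  have h4 : 4 / (α + β) ≤ 1 / α + 1 / β := by
    rw [div_add_div _ _ (ne_of_gt hα) (ne_of_gt hβ),
      div_le_div_iff₀ habpos (by positivity)]
    nlinarith [sq_nonneg (α - β)]
  have hnn : 0 ≤ (1 - ρ ^ 2) / (α * β) := div_nonneg (by nlinarith) (by positivity)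
  have hA : 4 * (1 - d) * s - 1 ≤ (1 - ρ ^ 2) / (α * β) + 1 / α + 1 / β + 1 := by
    linarith
  unfold sumRate
  have hlog : Real.log (4 * (1 - d) * s - 1) ≤
      Real.log ((1 - ρ ^ 2) / (α * β) + 1 / α + 1 / β + 1) :=
    Real.log_le_log (by linarith) hA
  linarith

/-- Fix `0 < d < 1`.  Then `R(σ², d) → ∞` as `σ² → ∞`:  the sum rate of the
separation-based scheme is unbounded in the regime where `ρ = 1 − 1/(2σ²)` and `σ² → ∞`. -/
theorem minSumRate_tendsto_atTop (d : ℝ) (hd0 : 0 < d) (hd1 : d < 1) :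
    Tendsto (fun s : ℝ => minSumRate d s) atTop atTop := by
  have hd1' : (0:ℝ) < 1 - d := by linarith
  have hL : Tendsto (fun s : ℝ => (1 / 2) * Real.log (4 * (1 - d) * s - 1)) atTop atTop := by
    apply Tendsto.const_mul_atTop (by norm_num : (0:ℝ) < 1 / 2)
    apply Real.tendsto_log_atTop.comp
    apply Filter.tendsto_atTop_add_const_right
    exact Tendsto.const_mul_atTop (by positivity) tendsto_id
  apply tendsto_atTop_mono' atTop _ hL
  filter_upwards [eventually_ge_atTop (1:ℝ), eventually_ge_atTop (1 / (2 * (1 - d)))] with s hs hs2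
  unfold minSumRate
  apply le_csInf
  · obtain ⟨α, β, hα, hβ, hcon⟩ := aux_nonempty d s hd0 hd1 hs
    exact ⟨sumRate α β (1 - 1 / (2 * s)), α, β, hα, hβ, hcon, rfl⟩
  · exact fun r hr => aux_lower d s hd0 hd1 hs hs2 r hr
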